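/- Let H be a Hilbert space and q a densely defined, closed, positive, symmetric sesquilinear form on H. Then there exists a unique densely defined, self-adjoint, positive operator Q with domain contained in dom(q) such that q[u, v] = ⟨Q u, v⟩ for all u ∈ dom(Q) and v ∈ dom(q) (the Friedrichs extension). -/

import Mathlib

open scoped ComplexConjugate

noncomputable section FriedrichsAux

variable {H : Type*} [NormedAddCommGroup H] [InnerProductSpace ℂ H]

/-- Type synonym for the form domain of a sesquilinear form, used to carry the form norm. -/
def FormSp (D : Submodule ℂ H) : Type _ := D

variable {D : Submodule ℂ H}

instance : AddCommGroup (FormSp D) := inferInstanceAs (AddCommGroup D)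
instance : Module ℂ (FormSp D) := inferInstanceAs (Module ℂ D)

/-- The inclusion of the form domain into the ambient space. -/
def FormSp.toH (u : FormSp D) : H := ((show D from u) : H)

lemma FormSp.memD (u : FormSp D) : u.toH ∈ D := (show D from u).2

lemma FormSp.toH_injective : Function.Injective (FormSp.toH (D := D)) :=
  fun _ _ h => Subtype.ext h

/-- The inclusion of the form domain into the ambient space as a linear map. -/
def FormSp.toHL : FormSp D →ₗ[ℂ] H where
  toFun := FormSp.toH
  map_add' _ _ := rfl
  map_smul' _ _ := rfl

lemma FormSp.toH_sub (a b : FormSp D) : (a - b).toH = a.toH - b.toH := rfl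

end FriedrichsAux

set_option maxHeartbeats 1000000 in
/-- **Friedrichs extension / Kato representation theorem.**
Let `H` be a Hilbert space and `q` a densely defined, closed, positive, symmetric sesquilinear
form on `H` with form domain `D`.  Then there exists a unique densely defined self-adjoint
positive operator `Q` with domain contained in `D` such that `q[u, v] = ⟪Q u, v⟫` for all
`u ∈ dom Q` and `v ∈ D`. -/
theorem friedrichs_extension_of_closed_positive_form
    {H : Type*} [NormedAddCommGroup H] [InnerProductSpace ℂ H] [CompleteSpace H]
    (D : Submodule ℂ H) (q : H → H → ℂ)
    -- densely defined
    (hdense : Dense (D : Set H))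
    -- sesquilinear on `D` (conjugate linear in the first entry, linear in the second)
    (hadd₁ : ∀ u u' v, u ∈ D → u' ∈ D → v ∈ D → q (u + u') v = q u v + q u' v)
    (hadd₂ : ∀ u v v', u ∈ D → v ∈ D → v' ∈ D → q u (v + v') = q u v + q u v')
    (hsmul₁ : ∀ (c : ℂ) u v, u ∈ D → v ∈ D → q (c • u) v = conj c * q u v)
    (hsmul₂ : ∀ (c : ℂ) u v, u ∈ D → v ∈ D → q u (c • v) = c * q u v)
    -- symmetric
    (hsymm : ∀ u v, u ∈ D → v ∈ D → q u v = conj (q v u))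
    -- positive
    (hpos : ∀ u, u ∈ D → 0 ≤ (q u u).re)
    -- closed: `D` is complete for the form norm `‖·‖² + q[·]`
    (hclosed : ∀ un : ℕ → H, ∀ u : H, (∀ n, un n ∈ D) →
      Filter.Tendsto un Filter.atTop (nhds u) →
      (∀ δ > (0 : ℝ), ∃ N, ∀ m ≥ N, ∀ n ≥ N, (q (un m - un n) (un m - un n)).re < δ) →
      u ∈ D ∧ Filter.Tendsto (fun n => (q (un n - u) (un n - u)).re) Filter.atTop (nhds 0)) :
    ∃! Q : H →ₗ.[ℂ] H,
      Dense (Q.domain : Set H) ∧ IsSelfAdjoint Q ∧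
      (∀ u : Q.domain, 0 ≤ (inner ℂ (Q u) (u : H) : ℂ).re) ∧
      (Q.domain : Set H) ⊆ (D : Set H) ∧
      (∀ u : Q.domain, ∀ v ∈ D, q (u : H) v = (inner ℂ (Q u) v : ℂ)) := by
  letI cd : InnerProductSpace.Core ℂ (FormSp D) :=
    { inner := fun u v => (inner ℂ u.toH v.toH : ℂ) + q u.toH v.toH
      conj_inner_symm := fun x y => by
        simp only [map_add, inner_conj_symm, ← hsymm _ _ x.memD y.memD]
      re_inner_nonneg := fun x => by
        have h1 : (0:ℝ) ≤ RCLike.re (inner ℂ x.toH x.toH : ℂ) := inner_self_nonneg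
        rw [RCLike.re_to_complex] at h1
        have h2 := hpos _ x.memD
        show (0:ℝ) ≤ RCLike.re ((inner ℂ x.toH x.toH : ℂ) + q x.toH x.toH)
        rw [RCLike.re_to_complex, Complex.add_re]; linarith
      add_left := fun x y z => by
        show (inner ℂ ((x+y).toH) z.toH : ℂ) + q ((x+y).toH) z.toH = _
        have : (x+y).toH = x.toH + y.toH := rfl
        rw [this, inner_add_left, hadd₁ _ _ _ x.memD y.memD z.memD]; ring
      smul_left := fun x y r => by
        show (inner ℂ ((r • x).toH) y.toH : ℂ) + q ((r • x).toH) y.toH = _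
        have : (r • x).toH = r • x.toH := rfl
        rw [this, inner_smul_left, hsmul₁ _ _ _ x.memD y.memD]; ring
      definite := fun x hx => by
        have h1 : (0:ℝ) ≤ RCLike.re (inner ℂ x.toH x.toH : ℂ) := inner_self_nonneg
        rw [RCLike.re_to_complex] at h1
        have h2 := hpos _ x.memD
        have h3 : (inner ℂ x.toH x.toH : ℂ).re + (q x.toH x.toH).re = 0 := by
          have := congrArg Complex.re hx
          simpa using this
        have h4 : (inner ℂ x.toH x.toH : ℂ).re = 0 := by linarith
        have him : (inner ℂ x.toH x.toH : ℂ).im = 0 := by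
          have := inner_self_im (𝕜 := ℂ) x.toH
          rwa [RCLike.im_to_complex] at this
        have h5 : (inner ℂ x.toH x.toH : ℂ) = 0 := Complex.ext h4 him
        have h6 : x.toH = 0 := inner_self_eq_zero.mp h5
        exact FormSp.toH_injective (by rw [h6]; rfl) }
  letI : NormedAddCommGroup (FormSp D) := InnerProductSpace.Core.toNormedAddCommGroup (𝕜 := ℂ) (F := FormSp D)
  letI : InnerProductSpace ℂ (FormSp D) := InnerProductSpace.ofCore cd.toCore
  have hinner_def : ∀ u v : FormSp D,
      (inner ℂ u v : ℂ) = (inner ℂ u.toH v.toH : ℂ) + q u.toH v.toH := fun u v => rfl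
  have hnorm : ∀ u : FormSp D, ‖u‖ ^ 2 = ‖u.toH‖ ^ 2 + (q u.toH u.toH).re := by
    intro u
    rw [← inner_self_eq_norm_sq (𝕜 := ℂ) u, hinner_def, map_add,
      inner_self_eq_norm_sq (𝕜 := ℂ) u.toH, RCLike.re_to_complex]
  have hle : ∀ u : FormSp D, ‖u.toH‖ ≤ ‖u‖ := by
    intro u
    have h1 : ‖u.toH‖ ^ 2 ≤ ‖u‖ ^ 2 := by
      have := hnorm u; have := hpos _ u.memD; linarith
    calc ‖u.toH‖ = √(‖u.toH‖ ^ 2) := (Real.sqrt_sq (norm_nonneg _)).symm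
      _ ≤ √(‖u‖ ^ 2) := Real.sqrt_le_sqrt h1
      _ = ‖u‖ := Real.sqrt_sq (norm_nonneg _)
  let J : FormSp D →L[ℂ] H :=
    LinearMap.mkContinuous FormSp.toHL 1 (fun u => by rw [one_mul]; exact hle u)
  have hJ : ∀ u : FormSp D, J u = u.toH := fun u => rfl
  haveI : CompleteSpace (FormSp D) := by
    apply Metric.complete_of_cauchySeq_tendsto
    intro xn hxn
    have hunC : CauchySeq (fun n => (xn n).toH) :=
      J.uniformContinuous.comp_cauchySeq hxn
    obtain ⟨u, hu⟩ := cauchySeq_tendsto_of_complete hunC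
    have hq : ∀ δ > (0 : ℝ), ∃ N, ∀ m ≥ N, ∀ n ≥ N,
        (q ((xn m).toH - (xn n).toH) ((xn m).toH - (xn n).toH)).re < δ := by
      intro δ hδ
      obtain ⟨N, hN⟩ := Metric.cauchySeq_iff.mp hxn (√δ) (Real.sqrt_pos.mpr hδ)
      refine ⟨N, fun m hm n hn => ?_⟩
      have hd := hN m hm n hn
      rw [dist_eq_norm] at hd
      have h2 : ‖xn m - xn n‖ ^ 2 < δ := by
        have := Real.sq_sqrt hδ.le
        nlinarith [norm_nonneg (xn m - xn n), Real.sqrt_nonneg δ]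
      have h3 := hnorm (xn m - xn n)
      rw [FormSp.toH_sub] at h3
      nlinarith [sq_nonneg ‖(xn m).toH - (xn n).toH‖]
    obtain ⟨huD, hq0⟩ := hclosed _ u (fun n => (xn n).memD) hu hq
    refine ⟨show FormSp D from (⟨u, huD⟩ : D), ?_⟩
    rw [tendsto_iff_dist_tendsto_zero]
    have hdistsq : ∀ n, dist (xn n) (show FormSp D from (⟨u, huD⟩ : D)) ^ 2
        = ‖(xn n).toH - u‖ ^ 2 + (q ((xn n).toH - u) ((xn n).toH - u)).re := by
      intro n
      rw [dist_eq_norm, hnorm]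
      rfl
    have hn0 : Filter.Tendsto (fun n => ‖(xn n).toH - u‖ ^ 2) Filter.atTop (nhds 0) := by
      have h1 : Filter.Tendsto (fun n => ‖(xn n).toH - u‖) Filter.atTop (nhds 0) :=
        tendsto_iff_norm_sub_tendsto_zero.mp hu
      simpa using h1.pow 2
    have hsum : Filter.Tendsto
        (fun n => ‖(xn n).toH - u‖ ^ 2 + (q ((xn n).toH - u) ((xn n).toH - u)).re)
        Filter.atTop (nhds 0) := by
      simpa using hn0.add hq0
    have : Filter.Tendsto (fun n => dist (xn n) (show FormSp D from (⟨u, huD⟩ : D)))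
        Filter.atTop (nhds 0) := by
      have hs : Filter.Tendsto (fun n => √(dist (xn n) (show FormSp D from (⟨u, huD⟩ : D)) ^ 2))
          Filter.atTop (nhds 0) := by
        have h := (Real.continuous_sqrt.tendsto 0).comp hsum
        rw [Real.sqrt_zero] at h
        simpa only [Function.comp_def, hdistsq] using h
      exact hs.congr (fun n => Real.sqrt_sq dist_nonneg)
    exact this
  -- Riesz representation: T f is the representative of v ↦ ⟪f, J v⟫ in the form space
  let T : H → FormSp D := fun f =>
    (InnerProductSpace.toDual ℂ (FormSp D)).symm ((innerSL ℂ f).comp J)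
  have hTspec : ∀ (f : H) (v : FormSp D), (inner ℂ (T f) v : ℂ) = inner ℂ f v.toH := by
    intro f v
    show (inner ℂ ((InnerProductSpace.toDual ℂ (FormSp D)).symm ((innerSL ℂ f).comp J)) v : ℂ) = _
    rw [InnerProductSpace.toDual_symm_apply]
    simp [hJ]
  have hT_add : ∀ f g : H, T (f + g) = T f + T g := by
    intro f g; apply ext_inner_right ℂ; intro v
    rw [inner_add_left, hTspec, hTspec, hTspec, inner_add_left]
  have hT_smul : ∀ (c : ℂ) (f : H), T (c • f) = c • T f := by
    intro c f; apply ext_inner_right ℂ; intro v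
    rw [inner_smul_left, hTspec, hTspec, inner_smul_left]
  let Slin : H →ₗ[ℂ] H :=
    { toFun := fun f => (T f).toH
      map_add' := fun f g => by
        show (T (f + g)).toH = (T f).toH + (T g).toH
        rw [hT_add]; rfl
      map_smul' := fun c f => by
        show (T (c • f)).toH = c • (T f).toH
        rw [hT_smul]; rfl }
  have hS : ∀ f, Slin f = (T f).toH := fun _ => rfl
  have hSd : ∀ f, Slin f ∈ D := fun f => (T f).memD
  have hSspec : ∀ (f : H) (v : FormSp D),
      (inner ℂ (Slin f) v.toH : ℂ) + q (Slin f) v.toH = inner ℂ f v.toH := by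
    intro f v
    have := hTspec f v
    rw [hinner_def] at this
    exact this
  have hTinj : ∀ f, T f = 0 → f = 0 := by
    intro f hf
    apply hdense.eq_zero_of_inner_left (𝕜 := ℂ)
    intro v hv
    have := hTspec f (show FormSp D from (⟨v, hv⟩ : D))
    rw [hf, inner_zero_left] at this
    exact this.symm
  have hSinj : Function.Injective Slin := by
    intro f g hfg
    have h1 : T f = T g := FormSp.toH_injective hfg
    have h2 : T (f - g) = 0 := by
      have : T (f - g) = T f - T g := by
        have := hT_add (f - g) g
        simp only [sub_add_cancel] at this
        rw [this]; abel
      rw [this, h1, sub_self]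
    have := hTinj _ h2
    exact sub_eq_zero.mp this
  -- the operator domain
  set K : Submodule ℂ H := LinearMap.range Slin with hKdef
  have hKD : (K : Set H) ⊆ (D : Set H) := by
    rintro x ⟨f, rfl⟩; exact hSd f
  have hKdense : Dense (K : Set H) := by
    rw [Submodule.dense_iff_topologicalClosure_eq_top, Submodule.topologicalClosure_eq_top_iff,
      Submodule.eq_bot_iff]
    intro g hg
    have h1 : (inner ℂ (Slin g) g : ℂ) = 0 :=
      (Submodule.mem_orthogonal K g).mp hg (Slin g) (LinearMap.mem_range_self _ g)
    have h2 : (inner ℂ (T g) (T g) : ℂ) = 0 := by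
      rw [hTspec g (T g), ← hS, ← inner_conj_symm, h1, map_zero]
    exact hTinj g (inner_self_eq_zero.mp h2)
  let e : H ≃ₗ[ℂ] K := LinearEquiv.ofInjective Slin hSinj
  have he : ∀ f : H, ((e f : H)) = Slin f := fun f => LinearEquiv.ofInjective_apply _ _
  have hSe : ∀ x : K, Slin (e.symm x) = (x : H) := fun x => by
    rw [← he, e.apply_symm_apply]
  have heS : ∀ (f : H) (h : Slin f ∈ K), e.symm ⟨Slin f, h⟩ = f := by
    intro f h
    have : (⟨Slin f, h⟩ : K) = e f := Subtype.ext (he f).symm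
    rw [this, e.symm_apply_apply]
  let Q : H →ₗ.[ℂ] H := ⟨K, (e.symm : K →ₗ[ℂ] H) - K.subtype⟩
  have hQdom : Q.domain = K := rfl
  have hQapp : ∀ x : K, Q x = e.symm x - (x : H) := fun _ => rfl
  have hQsum : ∀ x : K, Q x + (x : H) = e.symm x := fun x => by
    rw [hQapp]; abel
  have hsurj : ∀ g : H, ∃ x : K, Q x + (x : H) = g := by
    intro g
    refine ⟨⟨Slin g, LinearMap.mem_range_self _ g⟩, ?_⟩
    rw [hQsum, heS]
  have hrep : ∀ (x : K) (v : H), v ∈ D → q (x : H) v = inner ℂ (Q x) v := by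
    intro x v hv
    have h1 := hSspec (e.symm x) (show FormSp D from (⟨v, hv⟩ : D))
    have htoH : (show FormSp D from (⟨v, hv⟩ : D)).toH = v := rfl
    rw [htoH, hSe] at h1
    rw [hQapp, inner_sub_left]
    linear_combination h1
  have hQdense : Dense (Q.domain : Set H) := hKdense
  have hQsym : Q.IsFormalAdjoint Q := by
    intro x y
    have hxD : ((x : H)) ∈ D := hKD x.2
    have hyD : ((y : H)) ∈ D := hKD y.2
    rw [← hrep x _ hyD, hsymm _ _ hxD hyD, hrep y _ hxD, inner_conj_symm]
  have hQsa : IsSelfAdjoint Q := by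
    rw [LinearPMap.isSelfAdjoint_def]
    have hle : Q ≤ Q.adjoint := hQsym.le_adjoint hQdense
    have hge : Q.adjoint ≤ Q := by
      have hdomle : Q.adjoint.domain ≤ Q.domain := by
        intro w hw
        set w' : Q.adjoint.domain := ⟨w, hw⟩ with hw'def
        obtain ⟨x, hx⟩ := hsurj (w + Q.adjoint w')
        have horto : ∀ g : H, (inner ℂ (w - (x : H)) g : ℂ) = 0 := by
          intro g
          obtain ⟨v, hv⟩ := hsurj g
          have h1 : (inner ℂ w (Q v + (v : H)) : ℂ) = inner ℂ (Q.adjoint w' + w) ((v : H)) := by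
            rw [inner_add_right, inner_add_left]
            congr 1
            exact ((LinearPMap.adjoint_isFormalAdjoint hQdense) w' v).symm
          have h2 : (inner ℂ ((x : H)) (Q v + (v : H)) : ℂ) = inner ℂ (Q x + (x : H)) ((v : H)) := by
            rw [inner_add_right, inner_add_left]
            congr 1
            exact (hQsym x v).symm
          have h3 : (inner ℂ (w - (x : H)) (Q v + (v : H)) : ℂ) = 0 := by
            rw [inner_sub_left, h1, h2, hx, add_comm w (Q.adjoint w'), sub_self]
          rw [hv] at h3
          exact h3
        have hzero : w - (x : H) = 0 := inner_self_eq_zero.mp (horto (w - (x : H)))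
        have hw_eq : w = (x : H) := sub_eq_zero.mp hzero
        rw [hw_eq]
        exact x.2
      refine ⟨hdomle, ?_⟩
      intro a b hab
      apply hKdense.eq_of_inner_left (𝕜 := ℂ)
      intro v hv
      set v' : Q.domain := ⟨(v : H), hv⟩ with hv'def
      calc (inner ℂ (Q.adjoint a) ((v : H)) : ℂ)
          = inner ℂ ((a : H)) (Q v') := (LinearPMap.adjoint_isFormalAdjoint hQdense) a v'
        _ = inner ℂ ((b : H)) (Q v') := by rw [hab]
        _ = inner ℂ (Q b) ((v : H)) := (hQsym b v').symm
    exact le_antisymm hge hle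
  refine ⟨Q, ⟨hQdense, hQsa, ?_, hKD, fun u v hv => hrep u v hv⟩, ?_⟩
  · intro u
    rw [← hrep u _ (hKD u.2)]
    exact hpos _ (hKD u.2)
  · rintro Q' ⟨hd', hsa', _hpos', hsub', hrep'⟩
    have h1 : Q'.IsFormalAdjoint Q := by
      intro x y
      have hxD : ((x : H)) ∈ D := hsub' x.2
      have hyD : ((y : H)) ∈ D := hKD y.2
      rw [← hrep' x _ hyD, hsymm _ _ hxD hyD, hrep y _ hxD, inner_conj_symm]
    have h2 : Q.IsFormalAdjoint Q' := by
      intro x y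
      have hxD : ((x : H)) ∈ D := hKD x.2
      have hyD : ((y : H)) ∈ D := hsub' y.2
      rw [← hrep x _ hyD, hsymm _ _ hxD hyD, hrep' y _ hxD, inner_conj_symm]
    have hle1 : Q' ≤ Q.adjoint := h2.le_adjoint hQdense
    have hle2 : Q ≤ Q'.adjoint := h1.le_adjoint hd'
    rw [LinearPMap.isSelfAdjoint_def] at hsa' hQsa
    rw [hQsa] at hle1
    rw [hsa'] at hle2
    exact le_antisymm hle1 hle2
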